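/- For a partition μ = (μ₁ ≥ ⋯ ≥ μ_l) ∈ ℕ^l, the transformed Hall–Littlewood polynomial H_μ(a; q) := S^q_{μ₁} S^q_{μ₂} ⋯ S^q_{μ_l}(1), where S^q_m is the Jing operator (S^q_m f)(a₁,…,a_n; q) = Σ_{i=1}^n f(a₁,…,q a_i,…,a_n; q) · a_i^m / ∏_{j≠i}(1 - a_j/a_i), is a symmetric polynomial in a₁, …, a_n with coefficients in ℤ[q] (i.e., the apparent denominators cancel and the result is S_n-invariant). -/

import Mathlib

set_option maxHeartbeats 1000000
set_option synthInstance.maxHeartbeats 200000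

noncomputable section

/-- The ring `ℤ[q][a₁,…,a_n]` (with `q = Polynomial.X` in the coefficients). -/
abbrev HLRing (n : ℕ) := MvPolynomial (Fin n) (Polynomial ℤ)

/-- Its fraction field, where the Jing operator a priori takes values. -/
abbrev HLField (n : ℕ) := FractionRing (HLRing n)

/-- The variable `q`. -/
def qvar (n : ℕ) : HLRing n := MvPolynomial.C Polynomial.X

/-- Substitution `a_i ↦ q·a_i` (leaving the other variables fixed). -/
def scaleVar (n : ℕ) (i : Fin n) : HLRing n →ₐ[Polynomial ℤ] HLRing n :=
  MvPolynomial.aeval fun j =>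
    if j = i then qvar n * MvPolynomial.X j else MvPolynomial.X j

/-- The variable `a_i`, viewed in the fraction field. -/
def av (n : ℕ) (i : Fin n) : HLField n :=
  algebraMap (HLRing n) (HLField n) (MvPolynomial.X i)

namespace HL18

open Finset MvPolynomial

variable {n : ℕ}

lemma inj (n : ℕ) : Function.Injective (algebraMap (HLRing n) (HLField n)) :=
  IsFractionRing.injective _ _

lemma av_inj : Function.Injective (av n) := fun _ _ h =>
  MvPolynomial.X_injective (inj n h)

lemma av_ne_zero (i : Fin n) : av n i ≠ 0 := by
  have hX : (MvPolynomial.X i : HLRing n) ≠ 0 := MvPolynomial.X_ne_zero i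
  intro h
  exact hX (inj n (h.trans (map_zero _).symm))

/-- The denominator `∏_{j ≠ i} (X i - X j)`. -/
def Dp (n : ℕ) (i : Fin n) : HLRing n :=
  ∏ j ∈ Finset.univ.erase i, (MvPolynomial.X i - MvPolynomial.X j)

lemma map_Dp (i : Fin n) :
    algebraMap (HLRing n) (HLField n) (Dp n i) =
      ∏ j ∈ Finset.univ.erase i, (av n i - av n j) := by
  simp [Dp, map_prod, av]

/-- Power sums over the Lagrange denominators. -/
def Psum (n k : ℕ) : HLField n :=
  ∑ i : Fin n, av n i ^ k / algebraMap (HLRing n) (HLField n) (Dp n i)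

lemma lag_lt {k : ℕ} (hk : k < n) : Psum n k = if k = n - 1 then 1 else 0 := by
  classical
  set v : Fin n → HLField n := av n with hv
  have hvs : Set.InjOn v (Finset.univ : Finset (Fin n)) := fun i _ j _ h => av_inj h
  have hdeg : (Polynomial.X ^ k : Polynomial (HLField n)).degree
      < (Finset.univ : Finset (Fin n)).card := by
    rw [Polynomial.degree_X_pow]
    simp only [Finset.card_univ, Fintype.card_fin]
    exact_mod_cast hk
  have hint := Lagrange.eq_interpolate hvs hdeg
  have hco := congrArg (fun p => Polynomial.coeff p (n - 1)) hint
  rw [Polynomial.coeff_X_pow] at hco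
  rw [Lagrange.interpolate_apply, Polynomial.finset_sum_coeff] at hco
  have hb : ∀ i : Fin n, (Lagrange.basis Finset.univ v i).coeff (n - 1) =
      (algebraMap (HLRing n) (HLField n) (Dp n i))⁻¹ := by
    intro i
    have hbeq : Lagrange.basis Finset.univ v i
        = Polynomial.C (∏ j ∈ Finset.univ.erase i, (v i - v j)⁻¹) *
            Lagrange.nodal (Finset.univ.erase i) v := by
      rw [Lagrange.basis, Lagrange.nodal_eq, map_prod, ← Finset.prod_mul_distrib]
      rfl
    rw [hbeq, Polynomial.coeff_C_mul]
    have hdeg2 : (Lagrange.nodal (Finset.univ.erase i) v).natDegree = n - 1 := by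
      rw [Lagrange.natDegree_nodal]
      simp [Finset.card_erase_of_mem]
    rw [← hdeg2, (Lagrange.nodal_monic).coeff_natDegree, mul_one, map_Dp,
      Finset.prod_inv_distrib]
  have hrs : ∀ i : Fin n, Polynomial.C (Polynomial.eval (v i) (Polynomial.X ^ k)) *
        Lagrange.basis Finset.univ v i
      = Polynomial.C (v i ^ k) * Lagrange.basis Finset.univ v i := by
    intro i; rw [Polynomial.eval_pow, Polynomial.eval_X]
  rw [Finset.sum_congr rfl fun i _ => congrArg (fun p => Polynomial.coeff p (n - 1))
    (hrs i)] at hco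
  simp only [Polynomial.coeff_C_mul, hb] at hco
  have hP : Psum n k = ∑ i : Fin n, v i ^ k *
      (algebraMap (HLRing n) (HLField n) (Dp n i))⁻¹ := by
    unfold Psum
    exact Finset.sum_congr rfl fun i _ => div_eq_mul_inv _ _
  rw [hP, ← hco]
  by_cases h : k = n - 1 <;> simp [h]
  · intro hc; exact absurd hc.symm h

/-- coefficients for the reduction of `X i ^ n` to lower powers. -/
def cRed (n d : ℕ) : HLRing n :=
  -((-1) ^ n * ((-1) ^ d * esymm (Fin n) (Polynomial ℤ) (n - d)))

lemma hlNegPow {A : Type*} [CommRing A] (a : A) (m : ℕ) : (-a) ^ m = (-1) ^ m * a ^ m := by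
  rw [← neg_one_mul, mul_pow]

lemma pow_reduce (n : ℕ) : ∃ c : ℕ → HLRing n, (∀ j, (c j).IsSymmetric) ∧
    ∀ i : Fin n, (MvPolynomial.X i : HLRing n) ^ n =
      ∑ d ∈ Finset.range n, c d * MvPolynomial.X i ^ d := by
  refine ⟨cRed n, ?_, ?_⟩
  · intro d e
    unfold cRed
    simp [map_neg, map_mul, map_pow, (esymm_isSymmetric (Fin n) (Polynomial ℤ) (n - d)) e]
  · intro i
    have h0 := MvPolynomial.prod_C_add_X_eq_sum_esymm (Polynomial ℤ) (Fin n)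
    have h1 := congrArg (Polynomial.eval (-(MvPolynomial.X i : HLRing n))) h0
    rw [Polynomial.eval_prod] at h1
    simp only [Polynomial.eval_finset_sum, Polynomial.eval_mul, Polynomial.eval_C,
      Polynomial.eval_pow, Polynomial.eval_add, Polynomial.eval_X, Fintype.card_fin] at h1
    have hz : (∏ t : Fin n, (-(MvPolynomial.X i : HLRing n) + MvPolynomial.X t)) = 0 :=
      Finset.prod_eq_zero (Finset.mem_univ i) (by rw [neg_add_cancel])
    rw [hz] at h1
    rw [Finset.sum_range_succ'] at h1
    simp only [esymm_zero, Nat.sub_zero, one_mul] at h1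
    have key : (∑ j ∈ Finset.range n, esymm (Fin n) (Polynomial ℤ) (j + 1) *
          (-(MvPolynomial.X i : HLRing n)) ^ (n - (j + 1)))
        = -((-(MvPolynomial.X i : HLRing n)) ^ n) := by
      linear_combination -h1
    have hpow : ((-1 : HLRing n)) ^ n * (-1 : HLRing n) ^ n = 1 := by
      rw [← pow_add, ← two_mul, pow_mul]
      norm_num
    have hre : ∑ d ∈ Finset.range n, cRed n d * MvPolynomial.X i ^ d
        = ∑ j ∈ Finset.range n, cRed n (n - 1 - j) * MvPolynomial.X i ^ (n - 1 - j) :=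
      (Finset.sum_range_reflect (fun d => cRed n d * MvPolynomial.X i ^ d) n).symm
    have hterm : ∀ j ∈ Finset.range n, cRed n (n - 1 - j) * MvPolynomial.X i ^ (n - 1 - j)
        = -((-1 : HLRing n) ^ n * (esymm (Fin n) (Polynomial ℤ) (j + 1) *
            (-(MvPolynomial.X i : HLRing n)) ^ (n - (j + 1)))) := by
      intro j hj
      have hj' : j < n := Finset.mem_range.mp hj
      have e1 : n - (n - 1 - j) = j + 1 := by omega
      have e2 : n - (j + 1) = n - 1 - j := by omega
      unfold cRed
      rw [e1, e2, hlNegPow]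
      ring
    rw [hre, Finset.sum_congr rfl hterm]
    have hdist : ∑ j ∈ Finset.range n, -((-1 : HLRing n) ^ n *
          (esymm (Fin n) (Polynomial ℤ) (j + 1) *
            (-(MvPolynomial.X i : HLRing n)) ^ (n - (j + 1))))
        = -((-1 : HLRing n) ^ n * ∑ j ∈ Finset.range n,
            esymm (Fin n) (Polynomial ℤ) (j + 1) *
              (-(MvPolynomial.X i : HLRing n)) ^ (n - (j + 1))) := by
      rw [Finset.mul_sum, ← Finset.sum_neg_distrib]
    rw [hdist, key, hlNegPow]
    linear_combination (-(MvPolynomial.X i ^ n)) * hpow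

lemma lag_ge {k : ℕ} (hk : n ≤ k) (c : ℕ → HLRing n)
    (hc : ∀ i : Fin n, (MvPolynomial.X i : HLRing n) ^ n =
      ∑ d ∈ Finset.range n, c d * MvPolynomial.X i ^ d) :
    Psum n k = ∑ d ∈ Finset.range n,
      algebraMap (HLRing n) (HLField n) (c d) * Psum n (k - n + d) := by
  have havp : ∀ i : Fin n, av n i ^ n =
      ∑ d ∈ Finset.range n, algebraMap (HLRing n) (HLField n) (c d) * av n i ^ d := by
    intro i
    have := congrArg (algebraMap (HLRing n) (HLField n)) (hc i)
    simpa only [map_pow, map_sum, map_mul, av] using this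
  unfold Psum
  have hper : ∀ i : Fin n, av n i ^ k / algebraMap (HLRing n) (HLField n) (Dp n i)
      = ∑ d ∈ Finset.range n, algebraMap (HLRing n) (HLField n) (c d) *
          (av n i ^ (k - n + d) / algebraMap (HLRing n) (HLField n) (Dp n i)) := by
    intro i
    have h0 : av n i ^ k = av n i ^ (k - n) * av n i ^ n := by
      rw [← pow_add]; congr 1; omega
    have h1 : av n i ^ k = ∑ d ∈ Finset.range n,
        algebraMap (HLRing n) (HLField n) (c d) * av n i ^ (k - n + d) := by
      rw [h0, havp i, Finset.mul_sum]
      refine Finset.sum_congr rfl fun d _ => ?_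
      rw [pow_add]; ring
    rw [h1, Finset.sum_div]
    exact Finset.sum_congr rfl fun d _ => mul_div_assoc _ _ _
  rw [Finset.sum_congr rfl fun i _ => hper i, Finset.sum_comm]
  exact Finset.sum_congr rfl fun d _ => (Finset.mul_sum _ _ _).symm

lemma lag_symm (n : ℕ) (k : ℕ) :
    ∃ g : HLRing n, g.IsSymmetric ∧ algebraMap (HLRing n) (HLField n) g = Psum n k := by
  induction k using Nat.strong_induction_on with
  | _ k IH =>
  by_cases hk : k < n
  · refine ⟨if k = n - 1 then 1 else 0, ?_, ?_⟩
    · split_ifs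
      · exact (MvPolynomial.symmetricSubalgebra (Fin n) (Polynomial ℤ)).one_mem
      · exact (MvPolynomial.symmetricSubalgebra (Fin n) (Polynomial ℤ)).zero_mem
    · rw [lag_lt hk]
      split_ifs <;> simp
  · push_neg at hk
    obtain ⟨c, hcs, hce⟩ := pow_reduce n
    choose G hG1 hG2 using fun m (hm : m < k) => IH m hm
    have hlt : ∀ d : {x // x ∈ Finset.range n}, k - n + d.1 < k := by
      intro d
      have := Finset.mem_range.mp d.2
      omega
    refine ⟨∑ d ∈ (Finset.range n).attach, c d.1 * G (k - n + d.1) (hlt d), ?_, ?_⟩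
    · exact Subalgebra.sum_mem _ fun d _ => mul_mem
        ((MvPolynomial.mem_symmetricSubalgebra _).mpr (hcs d.1))
        ((MvPolynomial.mem_symmetricSubalgebra _).mpr (hG1 _ (hlt d)))
    · rw [map_sum, lag_ge hk c hce, ← Finset.sum_attach (Finset.range n)]
      refine Finset.sum_congr rfl fun d _ => ?_
      rw [map_mul, hG2 _ (hlt d)]

/-- `f` admits a uniform expansion in powers of `X i` with symmetric coefficients,
after scaling variable `i`. -/
def Good (f : HLRing n) : Prop :=
  ∃ F : Polynomial (HLRing n), (∀ k, (F.coeff k).IsSymmetric) ∧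
    ∀ i, scaleVar n i f = Polynomial.eval (MvPolynomial.X i) F

lemma good_C (a : Polynomial ℤ) : Good (MvPolynomial.C a : HLRing n) := by
  refine ⟨Polynomial.C (MvPolynomial.C a), ?_, ?_⟩
  · intro k
    rw [Polynomial.coeff_C]
    split_ifs
    · intro e; rw [rename_C]
    · intro e; rw [map_zero]
  · intro i
    rw [Polynomial.eval_C]
    have : (MvPolynomial.C a : HLRing n) = algebraMap (Polynomial ℤ) (HLRing n) a := rfl
    rw [this, AlgHom.commutes]

lemma good_add {f g : HLRing n} (hf : Good f) (hg : Good g) : Good (f + g) := by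
  obtain ⟨F, hF1, hF2⟩ := hf
  obtain ⟨G, hG1, hG2⟩ := hg
  refine ⟨F + G, ?_, ?_⟩
  · intro k
    rw [Polynomial.coeff_add]
    exact (MvPolynomial.mem_symmetricSubalgebra _).mp (Subalgebra.add_mem _
      ((MvPolynomial.mem_symmetricSubalgebra _).mpr (hF1 k))
      ((MvPolynomial.mem_symmetricSubalgebra _).mpr (hG1 k)))
  · intro i
    rw [map_add, Polynomial.eval_add, hF2 i, hG2 i]

lemma good_mul {f g : HLRing n} (hf : Good f) (hg : Good g) : Good (f * g) := by
  obtain ⟨F, hF1, hF2⟩ := hf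
  obtain ⟨G, hG1, hG2⟩ := hg
  refine ⟨F * G, ?_, ?_⟩
  · intro k
    rw [Polynomial.coeff_mul]
    refine (MvPolynomial.mem_symmetricSubalgebra _).mp (Subalgebra.sum_mem _ fun p _ =>
      Subalgebra.mul_mem _
        ((MvPolynomial.mem_symmetricSubalgebra _).mpr (hF1 p.1))
        ((MvPolynomial.mem_symmetricSubalgebra _).mpr (hG1 p.2)))
  · intro i
    rw [map_mul, Polynomial.eval_mul, hF2 i, hG2 i]

/-- elementary symmetric polynomial in the variables other than `i`. -/
def myE (n : ℕ) (i : Fin n) (k : ℕ) : HLRing n :=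
  ∑ S ∈ Finset.powersetCard k (Finset.univ.erase i), ∏ j ∈ S, MvPolynomial.X j

lemma myE_zero (i : Fin n) : myE n i 0 = 1 := by
  simp [myE]

lemma esymm_split (i : Fin n) (k : ℕ) :
    esymm (Fin n) (Polynomial ℤ) (k + 1) = myE n i (k + 1) + MvPolynomial.X i * myE n i k := by
  classical
  have huniv : (Finset.univ : Finset (Fin n)) = insert i (Finset.univ.erase i) :=
    (Finset.insert_erase (Finset.mem_univ i)).symm
  rw [esymm, huniv, Finset.powersetCard_succ_insert (Finset.notMem_erase i _)]
  have hdisj : Disjoint (Finset.powersetCard (k + 1) (Finset.univ.erase i))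
      ((Finset.powersetCard k (Finset.univ.erase i)).image (insert i)) := by
    rw [Finset.disjoint_left]
    intro S hS hS'
    obtain ⟨T, hT, rfl⟩ := Finset.mem_image.mp hS'
    have : i ∉ insert i T := fun h => Finset.notMem_erase i _
      ((Finset.mem_powersetCard.mp hS).1 h)
    exact this (Finset.mem_insert_self i T)
  rw [Finset.sum_union hdisj]
  congr 1
  rw [Finset.sum_image]
  · rw [myE, Finset.mul_sum]
    refine Finset.sum_congr rfl fun S hS => ?_
    have hiS : i ∉ S := fun h => Finset.notMem_erase i _
      ((Finset.mem_powersetCard.mp hS).1 h)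
    rw [Finset.prod_insert hiS]
  · intro S hS T hT hST
    have hiS : i ∉ S := fun h => Finset.notMem_erase i _
      ((Finset.mem_powersetCard.mp hS).1 h)
    have hiT : i ∉ T := fun h => Finset.notMem_erase i _
      ((Finset.mem_powersetCard.mp hT).1 h)
    rw [← Finset.erase_insert hiS, ← Finset.erase_insert hiT, hST]

lemma scale_myE (i : Fin n) (k : ℕ) : scaleVar n i (myE n i k) = myE n i k := by
  rw [myE, map_sum]
  refine Finset.sum_congr rfl fun S hS => ?_
  rw [map_prod]
  refine Finset.prod_congr rfl fun j hj => ?_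
  have hji : j ≠ i := by
    have := (Finset.mem_powersetCard.mp hS).1 hj
    exact (Finset.mem_erase.mp this).1
  rw [scaleVar, aeval_X, if_neg hji]

lemma scale_X (i : Fin n) : scaleVar n i (MvPolynomial.X i) = qvar n * MvPolynomial.X i := by
  rw [scaleVar, aeval_X, if_pos rfl]

lemma scale_esymm (i : Fin n) (k : ℕ) :
    scaleVar n i (esymm (Fin n) (Polynomial ℤ) (k + 1)) =
      myE n i (k + 1) + qvar n * MvPolynomial.X i * myE n i k := by
  rw [esymm_split i k, map_add, map_mul, scale_myE, scale_myE, scale_X]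

lemma myE_eq (i : Fin n) (k : ℕ) : myE n i k =
    ∑ s ∈ Finset.range (k + 1),
      (-1 : HLRing n) ^ s * esymm (Fin n) (Polynomial ℤ) (k - s) * MvPolynomial.X i ^ s := by
  induction k with
  | zero => simp [myE_zero, esymm_zero]
  | succ k ih =>
    set g : ℕ → HLRing n := fun s =>
      (-1 : HLRing n) ^ s * esymm (Fin n) (Polynomial ℤ) (k + 1 - s) * MvPolynomial.X i ^ s
      with hg
    have e0 := Finset.sum_range_succ' g (k + 1)
    rw [e0]
    have hg0 : g 0 = esymm (Fin n) (Polynomial ℤ) (k + 1) := by simp [hg]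
    have hterm : ∑ s ∈ Finset.range (k + 1), g (s + 1) = -(MvPolynomial.X i * myE n i k) := by
      rw [ih, Finset.mul_sum, ← Finset.sum_neg_distrib]
      refine Finset.sum_congr rfl fun s _ => ?_
      have hks : k + 1 - (s + 1) = k - s := by omega
      simp only [hg, hks]
      ring
    rw [hterm, hg0]
    linear_combination -esymm_split i k

/-- the polynomial whose evaluation at `X i` is `myE n i k`. -/
def Falt (n k : ℕ) : Polynomial (HLRing n) :=
  ∑ s ∈ Finset.range (k + 1),
    Polynomial.C ((-1 : HLRing n) ^ s * esymm (Fin n) (Polynomial ℤ) (k - s)) * Polynomial.X ^ s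

lemma Falt_coeff_symm (k t : ℕ) : ((Falt n k).coeff t).IsSymmetric := by
  rw [Falt, Polynomial.finset_sum_coeff]
  refine (MvPolynomial.mem_symmetricSubalgebra _).mp (Subalgebra.sum_mem _ fun s _ => ?_)
  rw [Polynomial.coeff_C_mul, Polynomial.coeff_X_pow]
  split_ifs
  · rw [mul_one]
    exact Subalgebra.mul_mem _
      (Subalgebra.pow_mem _ (Subalgebra.neg_mem _ (Subalgebra.one_mem _)) s)
      ((MvPolynomial.mem_symmetricSubalgebra _).mpr (esymm_isSymmetric _ _ _))
  · rw [mul_zero]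
    exact Subalgebra.zero_mem _

lemma Falt_eval (i : Fin n) (k : ℕ) :
    Polynomial.eval (MvPolynomial.X i) (Falt n k) = myE n i k := by
  rw [Falt, Polynomial.eval_finset_sum]
  simp only [Polynomial.eval_mul, Polynomial.eval_C, Polynomial.eval_pow, Polynomial.eval_X]
  exact (myE_eq i k).symm

lemma good_esymm (k : ℕ) : Good (esymm (Fin n) (Polynomial ℤ) k) := by
  cases k with
  | zero =>
    rw [esymm_zero]
    have := good_C (n := n) 1
    rwa [map_one] at this
  | succ k =>
    refine ⟨Falt n (k + 1) + Polynomial.C (qvar n) * (Polynomial.X * Falt n k), ?_, ?_⟩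
    · intro t
      rw [Polynomial.coeff_add, Polynomial.coeff_C_mul]
      refine (MvPolynomial.mem_symmetricSubalgebra _).mp (Subalgebra.add_mem _
        ((MvPolynomial.mem_symmetricSubalgebra _).mpr (Falt_coeff_symm _ _))
        (Subalgebra.mul_mem _ ?_ ?_))
      · refine (MvPolynomial.mem_symmetricSubalgebra _).mpr ?_
        intro e
        rw [qvar, rename_C]
      · cases t with
        | zero =>
          rw [Polynomial.mul_coeff_zero, Polynomial.coeff_X_zero, zero_mul]
          exact Subalgebra.zero_mem _
        | succ t =>
          rw [Polynomial.coeff_X_mul]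
          exact (MvPolynomial.mem_symmetricSubalgebra _).mpr (Falt_coeff_symm _ _)
    · intro i
      rw [Polynomial.eval_add, Polynomial.eval_mul, Polynomial.eval_mul, Polynomial.eval_C,
        Polynomial.eval_X, Falt_eval, Falt_eval, scale_esymm]
      ring

lemma good_of_symmetric {f : HLRing n} (hf : f.IsSymmetric) : Good f := by
  obtain ⟨p, hp⟩ := MvPolynomial.esymmAlgHom_surjective (σ := Fin n) (Polynomial ℤ)
    (n := n) (by simp) ⟨f, (MvPolynomial.mem_symmetricSubalgebra f).mpr hf⟩
  have hf' : f = aeval (fun i : Fin n => esymm (Fin n) (Polynomial ℤ) (i + 1)) p := by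
    have h2 := congrArg Subtype.val hp
    rw [MvPolynomial.esymmAlgHom_apply] at h2
    exact h2.symm
  rw [hf']
  clear hf' hp hf
  induction p using MvPolynomial.induction_on with
  | C a =>
    rw [aeval_C]
    exact good_C a
  | add p q hp hq =>
    rw [map_add]
    exact good_add hp hq
  | mul_X p s hp =>
    rw [map_mul, aeval_X]
    exact good_mul hp (good_esymm _)

lemma jing_exists (n : ℕ) (hn : 0 < n) (m : ℕ) (f : HLRing n) (hf : f.IsSymmetric) :
    ∃ g : HLRing n, g.IsSymmetric ∧
      algebraMap (HLRing n) (HLField n) g =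
        ∑ i : Fin n,
          algebraMap (HLRing n) (HLField n) (scaleVar n i f) * av n i ^ m /
            ∏ j ∈ Finset.univ.erase i, (1 - av n j / av n i) := by
  classical
  obtain ⟨F, hF1, hF2⟩ := good_of_symmetric hf
  choose G hG1 hG2 using lag_symm n
  refine ⟨∑ k ∈ Finset.range (F.natDegree + 1), F.coeff k * G (k + (m + (n - 1))), ?_, ?_⟩
  · exact (MvPolynomial.mem_symmetricSubalgebra _).mp (Subalgebra.sum_mem _ fun k _ =>
      Subalgebra.mul_mem _
        ((MvPolynomial.mem_symmetricSubalgebra _).mpr (hF1 k))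
        ((MvPolynomial.mem_symmetricSubalgebra _).mpr (hG1 _)))
  · have hden : ∀ i : Fin n, ∏ j ∈ Finset.univ.erase i, (1 - av n j / av n i)
        = algebraMap (HLRing n) (HLField n) (Dp n i) / av n i ^ (n - 1) := by
      intro i
      have h1 : ∀ j ∈ Finset.univ.erase i, 1 - av n j / av n i
          = (av n i - av n j) / av n i := fun j _ => one_sub_div (av_ne_zero i)
      rw [Finset.prod_congr rfl h1, Finset.prod_div_distrib, Finset.prod_const, map_Dp]
      congr 2
      rw [Finset.card_erase_of_mem (Finset.mem_univ i), Finset.card_univ, Fintype.card_fin]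
    have hterm : ∀ i : Fin n,
        algebraMap (HLRing n) (HLField n) (scaleVar n i f) * av n i ^ m /
          ∏ j ∈ Finset.univ.erase i, (1 - av n j / av n i)
        = ∑ k ∈ Finset.range (F.natDegree + 1),
            algebraMap (HLRing n) (HLField n) (F.coeff k) *
              (av n i ^ (k + (m + (n - 1))) /
                algebraMap (HLRing n) (HLField n) (Dp n i)) := by
      intro i
      rw [hden i, div_div_eq_mul_div, hF2 i, Polynomial.eval_eq_sum_range, map_sum]
      simp only [map_mul, map_pow]
      have hXi : algebraMap (HLRing n) (HLField n) (MvPolynomial.X i) = av n i := rfl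
      simp only [hXi]
      rw [Finset.sum_mul, Finset.sum_mul, Finset.sum_div]
      refine Finset.sum_congr rfl fun k _ => ?_
      rw [pow_add, pow_add]
      ring
    rw [Finset.sum_congr rfl fun i _ => hterm i, Finset.sum_comm, map_sum]
    refine Finset.sum_congr rfl fun k _ => ?_
    rw [map_mul, hG2]
    unfold Psum
    rw [Finset.mul_sum]

end HL18

/-- The transformed Hall–Littlewood polynomial
`H_μ(a;q) = S^q_{μ₁} S^q_{μ₂} ⋯ S^q_{μ_l}(1)`, where the Jing operator is
`(S^q_m f)(a) = Σ_i f(a₁,…,q aᵢ,…,a_n) · aᵢ^m / ∏_{j≠i}(1 - a_j/a_i)`, is a symmetric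
polynomial in `a₁,…,a_n` with coefficients in `ℤ[q]`: there is a sequence of symmetric
polynomials `seq l = 1, seq (l-1), …, seq 0 = H_μ` realizing the iteration in the
fraction field (the apparent denominators cancel at every step). -/
theorem statement18 (n l : ℕ) (hn : 0 < n)
    (μ : Fin l → ℕ) (hμ : Antitone μ) :
    ∃ seq : ℕ → HLRing n,
      seq l = 1 ∧
      (∀ t, MvPolynomial.IsSymmetric (seq t)) ∧
      ∀ t, ∀ ht : t < l,
        algebraMap (HLRing n) (HLField n) (seq t) =
          ∑ i : Fin n,
            algebraMap (HLRing n) (HLField n) (scaleVar n i (seq (t + 1))) *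
                av n i ^ μ ⟨t, ht⟩ /
              ∏ j ∈ Finset.univ.erase i, (1 - av n j / av n i) := by
  classical
  set jg : ℕ → HLRing n → HLRing n := fun m f =>
    if hf : f.IsSymmetric then (HL18.jing_exists n hn m f hf).choose else 0 with hjg
  have jg_symm : ∀ m f, f.IsSymmetric → (jg m f).IsSymmetric := by
    intro m f hf
    simp only [hjg, dif_pos hf]
    exact (HL18.jing_exists n hn m f hf).choose_spec.1
  have jg_eq : ∀ m f (hf : f.IsSymmetric),
      algebraMap (HLRing n) (HLField n) (jg m f) =
        ∑ i : Fin n,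
          algebraMap (HLRing n) (HLField n) (scaleVar n i f) * av n i ^ m /
            ∏ j ∈ Finset.univ.erase i, (1 - av n j / av n i) := by
    intro m f hf
    simp only [hjg, dif_pos hf]
    exact (HL18.jing_exists n hn m f hf).choose_spec.2
  set μ' : ℕ → ℕ := fun t => if h : t < l then μ ⟨t, h⟩ else 0 with hμ'
  set go : ℕ → HLRing n := fun s => Nat.rec 1 (fun s ih => jg (μ' (l - s - 1)) ih) s with hgo
  have go_succ : ∀ s, go (s + 1) = jg (μ' (l - s - 1)) (go s) := fun s => rfl
  have go_symm : ∀ s, (go s).IsSymmetric := by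
    intro s
    induction s with
    | zero =>
      intro e
      simp [hgo]
    | succ s ih =>
      rw [go_succ]
      exact jg_symm _ _ ih
  refine ⟨fun t => go (l - t), by simp [hgo], fun t => go_symm _, ?_⟩
  intro t ht
  have h1 : l - t = (l - (t + 1)) + 1 := by omega
  have h2 : l - (l - (t + 1)) - 1 = t := by omega
  have h3 : μ' t = μ ⟨t, ht⟩ := by simp [hμ', dif_pos ht]
  beta_reduce
  rw [h1, go_succ, h2, h3]
  exact jg_eq _ _ (go_symm _)
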